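/- Let n ≥ 2 and let N be a regular nilpotent n×n complex matrix, i.e. N^n = 0 and N^{n−1} ≠ 0. Then ψ(N) := Id + t^{−1}N + t^{−2}N² + ⋯ + t^{−(n−1)}N^{n−1} lies in the double coset G_0·κ·G_0; that is, there exist g_1, g_2 ∈ SL_n(A) such that ψ(N) = g_1·κ·g_2 in SL_n(F). -/

import Mathlib

/-! Statement 1: For a regular nilpotent complex matrix `N`,
`ψ(N) = Id + t⁻¹N + ⋯ + t^{-(n-1)}N^{n-1}` lies in the double coset `G₀·κ·G₀` in `SL_n(F)`. -/

noncomputable section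

noncomputable section

/-- The field of formal Laurent series over `ℂ`. -/
abbrev FF : Type := LaurentSeries ℂ

/-- The uniformizer `t` of `ℂ((t))`. -/
def tF : FF := HahnSeries.single (1 : ℤ) (1 : ℂ)

/-- An element of `F = ℂ((t))` is integral if it lies in `A = ℂ[[t]]`,
i.e. all coefficients of negative index vanish. -/
def Integral (x : FF) : Prop := ∀ m : ℤ, m < 0 → x.coeff m = 0

/-- Membership in `G₀ = SL_n(ℂ[[t]])`: all entries integral and determinant `1`. -/
def MemG0 {n : ℕ} (g : Matrix (Fin n) (Fin n) FF) : Prop :=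
  g.det = 1 ∧ ∀ i j : Fin n, Integral (g i j)

/-- Membership in the Iwahori subgroup `𝓑`: all entries integral, determinant `1`,
and the matrix of constant terms `h(0)` is upper triangular. -/
def MemIwahori {n : ℕ} (h : Matrix (Fin n) (Fin n) FF) : Prop :=
  h.det = 1 ∧ (∀ i j : Fin n, Integral (h i j)) ∧
    ∀ i j : Fin n, (j : ℕ) < (i : ℕ) → (h i j).coeff 0 = 0

/-- The element `κ = diag(t, t, …, t, t^{-(n-1)})` of `SL_n(F)`. -/
def kappaMat (n : ℕ) : Matrix (Fin n) (Fin n) FF :=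
  Matrix.diagonal fun i => if (i : ℕ) = n - 1 then tF ^ (-((n : ℤ) - 1)) else tF

/-- A complex matrix viewed as a matrix over `F = ℂ((t))`. -/
def liftC {n : ℕ} (Y : Matrix (Fin n) (Fin n) ℂ) : Matrix (Fin n) (Fin n) FF :=
  Y.map (algebraMap ℂ FF)

/-- For a nilpotent complex matrix `Y`, the element
`Ȳ = Id + t⁻¹Y + t⁻²Y² + ⋯ + t^{-(n-1)}Y^{n-1}` of `SL_n(F)`. -/
def Ybar {n : ℕ} (Y : Matrix (Fin n) (Fin n) ℂ) : Matrix (Fin n) (Fin n) FF :=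
  ∑ k ∈ Finset.range n, tF ^ (-(k : ℤ)) • liftC (Y ^ k)

/-! ### Auxiliary development -/

open Matrix

section Aux

/-! #### Basic facts about `tF` and `Integral` -/

lemma tF_ne_zero : tF ≠ 0 := HahnSeries.single_ne_zero one_ne_zero

lemma tF_pow (k : ℕ) : tF ^ k = HahnSeries.single (k : ℤ) (1 : ℂ) := by
  rw [tF, HahnSeries.single_pow, one_pow, nsmul_eq_mul, mul_one]

lemma tF_zpow (m : ℤ) : tF ^ m = HahnSeries.single m (1 : ℂ) := by
  rcases m with k | k
  · exact_mod_cast tF_pow k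
  · have h1 : tF ^ ((k+1 : ℕ) : ℤ) = HahnSeries.single ((k+1 : ℕ) : ℤ) (1 : ℂ) := by
      rw [zpow_natCast]; exact tF_pow (k+1)
    have hmul : HahnSeries.single (Int.negSucc k) (1 : ℂ) * tF ^ ((k+1 : ℕ) : ℤ) = 1 := by
      rw [h1, HahnSeries.single_mul_single, one_mul,
        show Int.negSucc k + ((k+1 : ℕ) : ℤ) = 0 by rw [Int.negSucc_eq]; push_cast; ring, HahnSeries.single_zero_one]
    have hz : tF ^ (Int.negSucc k) * tF ^ ((k+1 : ℕ) : ℤ) = 1 := by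
      rw [← zpow_add₀ tF_ne_zero, show Int.negSucc k + ((k+1 : ℕ) : ℤ) = 0 by rw [Int.negSucc_eq]; push_cast; ring, zpow_zero]
    rw [eq_inv_of_mul_eq_one_left hz, eq_inv_of_mul_eq_one_left hmul]

lemma algebraMap_FF (c : ℂ) : algebraMap ℂ FF c = HahnSeries.single (0:ℤ) c := by
  rw [HahnSeries.algebraMap_apply', PowerSeries.algebraMap_apply, HahnSeries.ofPowerSeries_C,
    HahnSeries.C_apply]
  norm_num

lemma integral_tF_pow (k : ℕ) : Integral (tF ^ k) := by
  intro m hm; rw [tF_pow, HahnSeries.coeff_single, if_neg (by omega)]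

lemma integral_algebraMap (c : ℂ) : Integral (algebraMap ℂ FF c) := by
  intro m hm
  rw [algebraMap_FF, HahnSeries.coeff_single, if_neg (by omega)]

lemma Integral.zero : Integral (0 : FF) := fun _ _ => rfl

lemma Integral.one : Integral (1 : FF) := by
  intro m hm
  rw [show (1:FF) = HahnSeries.single (0:ℤ) (1:ℂ) from (HahnSeries.single_zero_one).symm,
    HahnSeries.coeff_single, if_neg (by omega)]

lemma Integral.add {x y : FF} (hx : Integral x) (hy : Integral y) : Integral (x + y) := by
  intro m hm; rw [HahnSeries.coeff_add, hx m hm, hy m hm, add_zero]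

lemma Integral.neg {x : FF} (hx : Integral x) : Integral (-x) := by
  intro m hm; rw [HahnSeries.coeff_neg, hx m hm, neg_zero]

lemma Integral.mul {x y : FF} (hx : Integral x) (hy : Integral y) : Integral (x * y) := by
  intro m hm
  rw [HahnSeries.coeff_mul]
  refine Finset.sum_eq_zero fun ij hij => ?_
  rw [Finset.mem_addAntidiagonal] at hij
  rcases lt_or_ge ij.1 0 with h | h
  · rw [hx ij.1 h, zero_mul]
  · have : ij.2 < 0 := by omega
    rw [hy ij.2 this, mul_zero]

lemma Integral.finsum {ι : Type*} (s : Finset ι) (f : ι → FF) (h : ∀ i ∈ s, Integral (f i)) :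
    Integral (∑ i ∈ s, f i) := by
  classical
  induction s using Finset.induction_on with
  | empty => simpa using Integral.zero
  | insert _ _ hns ih =>
    rw [Finset.sum_insert hns]
    exact (h _ (Finset.mem_insert_self _ _)).add
      (ih fun i hi => h i (Finset.mem_insert_of_mem hi))

lemma integral_mul_mat {n : ℕ} {a b : Matrix (Fin n) (Fin n) FF}
    (ha : ∀ i j, Integral (a i j)) (hb : ∀ i j, Integral (b i j)) :
    ∀ i j, Integral ((a * b) i j) := by
  intro i j
  rw [Matrix.mul_apply]
  exact Integral.finsum _ _ fun k _ => (ha i k).mul (hb k j)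

/-! #### The Jordan block and the explicit factorization -/

/-- The regular nilpotent Jordan block, with ones on the superdiagonal. -/
def Jmat (n : ℕ) : Matrix (Fin n) (Fin n) ℂ :=
  Matrix.of fun i j => if (j : ℕ) = (i : ℕ) + 1 then 1 else 0

lemma Jmat_pow (n k : ℕ) (i j : Fin n) :
    (Jmat n ^ k) i j = if (j : ℕ) = (i : ℕ) + k then 1 else 0 := by
  induction k generalizing i j with
  | zero =>
    simp only [pow_zero, Matrix.one_apply, add_zero]
    congr 1
    simp [Fin.ext_iff, eq_comm]
  | succ k ih =>
    rw [pow_succ, Matrix.mul_apply]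
    by_cases h : (i : ℕ) + k < n
    · rw [Finset.sum_eq_single (⟨(i : ℕ) + k, h⟩ : Fin n)]
      · rw [ih, Jmat]
        simp only [Matrix.of_apply]
        norm_num [add_assoc]
      · intro b _ hb
        rw [ih, if_neg, zero_mul]
        intro hc
        exact hb (Fin.ext hc)
      · intro hm; exact absurd (Finset.mem_univ _) hm
    · rw [Finset.sum_eq_zero, if_neg (by omega)]
      intro b _
      rw [ih, if_neg (by omega), zero_mul]

/-- `Ybar (Jmat n)` written out explicitly: upper triangular with `t^{i-j}`. -/
def Umat (n : ℕ) : Matrix (Fin n) (Fin n) FF :=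
  Matrix.of fun i j => if (i : ℕ) ≤ (j : ℕ) then tF ^ ((i : ℤ) - (j : ℕ)) else 0

lemma Ybar_Jmat (n : ℕ) : Ybar (Jmat n) = Umat n := by
  refine Matrix.ext fun i j => ?_
  rw [Ybar, Matrix.sum_apply]
  have hterm : ∀ k ∈ Finset.range n,
      (tF ^ (-(k : ℤ)) • liftC (Jmat n ^ k)) i j
        = if (j : ℕ) = (i : ℕ) + k then tF ^ (-(k : ℤ)) else 0 := by
    intro k _
    rw [Matrix.smul_apply, liftC, Matrix.map_apply, Jmat_pow, apply_ite (algebraMap ℂ FF),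
      _root_.map_one, _root_.map_zero, smul_eq_mul, mul_ite, mul_one, mul_zero]
  rw [Finset.sum_congr rfl hterm]
  by_cases hij : (i : ℕ) ≤ (j : ℕ)
  · rw [Finset.sum_eq_single ((j : ℕ) - (i : ℕ))]
    · rw [if_pos (by omega : (j:ℕ) = (i:ℕ) + ((j:ℕ) - (i:ℕ))), Umat, Matrix.of_apply,
        if_pos hij]
      congr 1
      rw [Nat.cast_sub hij]
      ring
    · intro b _ hb
      rw [if_neg (by omega)]
    · intro hmem
      exact absurd (Finset.mem_range.2 (by omega)) hmem
  · rw [Finset.sum_eq_zero, Umat, Matrix.of_apply, if_neg hij]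
    intro b _
    rw [if_neg (by omega)]

/-- Left factor of the factorization of `Umat`. -/
def G1 (n : ℕ) : Matrix (Fin n) (Fin n) FF :=
  Matrix.of fun i j =>
    if (j : ℕ) = n - 1 then tF ^ (i : ℕ) else if (i : ℕ) = (j : ℕ) + 1 then -1 else 0

/-- Right factor of the factorization of `Umat`: lower triangular with `t^{i-j}`. -/
def G2 (n : ℕ) : Matrix (Fin n) (Fin n) FF :=
  Matrix.of fun i j => if (j : ℕ) ≤ (i : ℕ) then tF ^ ((i : ℕ) - (j : ℕ)) else 0

/-- The key identity: `G1 · κ · G2 = Umat`. -/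
lemma key (m : ℕ) :
    G1 (m+1) * kappaMat (m+1) * G2 (m+1) = Umat (m+1) := by
  have htF := tF_ne_zero
  refine Matrix.ext fun i j => ?_
  rw [Matrix.mul_apply]
  simp only [kappaMat, Matrix.mul_diagonal]
  rw [Fin.sum_univ_castSucc]
  have hjm : (j : ℕ) ≤ m := Fin.is_le j
  have him : (i : ℕ) ≤ m := Fin.is_le i
  have hlast : G1 (m+1) i (Fin.last m)
        * (if ((Fin.last m : Fin (m+1)) : ℕ) = (m+1) - 1
            then tF ^ (-(((m+1 : ℕ) : ℤ) - 1)) else tF)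
        * G2 (m+1) (Fin.last m) j = tF ^ ((i : ℤ) - (j : ℕ)) := by
    rw [G1, G2]
    simp only [Matrix.of_apply, Fin.val_last]
    rw [if_pos (by omega), if_pos (by omega), if_pos hjm]
    rw [show tF ^ (i:ℕ) = tF ^ ((i:ℕ):ℤ) from (zpow_natCast tF _).symm,
      show tF ^ (m - (j:ℕ)) = tF ^ ((m - (j:ℕ) : ℕ) : ℤ) from (zpow_natCast tF _).symm,
      ← zpow_add₀ htF, ← zpow_add₀ htF]
    congr 1
    push_cast [Nat.cast_sub hjm]
    ring
  rw [hlast]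
  have hcast : ∀ k : Fin m,
      G1 (m+1) i (Fin.castSucc k)
        * (if ((Fin.castSucc k : Fin (m+1)) : ℕ) = (m+1) - 1
            then tF ^ (-(((m+1 : ℕ) : ℤ) - 1)) else tF)
        * G2 (m+1) (Fin.castSucc k) j
      = if (i : ℕ) = (k : ℕ) + 1 then
          (if (j : ℕ) ≤ (k : ℕ) then -(tF ^ ((k : ℕ) - (j : ℕ) + 1)) else 0) else 0 := by
    intro k
    have hk : (k : ℕ) < m := k.isLt
    rw [G1, G2]
    simp only [Matrix.of_apply, Fin.coe_castSucc]
    have hkm : ¬((k:ℕ) = (m+1)-1) := by omega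
    rw [if_neg hkm, if_neg hkm]
    by_cases hik : (i : ℕ) = (k : ℕ) + 1
    · rw [if_pos hik, if_pos hik]
      by_cases hjk : (j : ℕ) ≤ (k : ℕ)
      · rw [if_pos hjk, if_pos hjk, pow_succ]
        ring
      · rw [if_neg hjk, if_neg hjk, mul_zero]
    · rw [if_neg hik, if_neg hik, zero_mul, zero_mul]
  rw [Finset.sum_congr rfl (fun k _ => hcast k)]
  by_cases hij : (i : ℕ) ≤ (j : ℕ)
  · rw [Finset.sum_eq_zero, zero_add, Umat, Matrix.of_apply, if_pos hij]
    intro k _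
    by_cases hik : (i : ℕ) = (k : ℕ) + 1
    · rw [if_pos hik, if_neg (by omega)]
    · rw [if_neg hik]
  · have hi1 : 1 ≤ (i : ℕ) := by omega
    have hlt : (i : ℕ) - 1 < m := by omega
    rw [Finset.sum_eq_single (⟨(i : ℕ) - 1, hlt⟩ : Fin m)]
    · simp only [Fin.val_mk]
      rw [if_pos (by omega : (i:ℕ) = (i:ℕ) - 1 + 1), if_pos (by omega : (j:ℕ) ≤ (i:ℕ) - 1),
        Umat, Matrix.of_apply, if_neg hij]
      have h1 : (i : ℕ) - 1 - (j : ℕ) + 1 = (i : ℕ) - (j : ℕ) := by omega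
      rw [h1, show tF ^ ((i:ℕ) - (j:ℕ)) = tF ^ (((i:ℕ) - (j:ℕ) : ℕ) : ℤ) from
        (zpow_natCast tF _).symm, show ((((i:ℕ) - (j:ℕ) : ℕ)) : ℤ) = (i : ℤ) - (j : ℕ) by omega]
      ring
    · intro b _ hb
      have hbne : ¬((i:ℕ) = (b:ℕ)+1) := by
        intro hc
        apply hb
        apply Fin.ext
        simp only [Fin.val_mk]
        omega
      rw [if_neg hbne]
    · intro hmem; exact absurd (Finset.mem_univ _) hmem

/-! #### Determinants -/

lemma det_Umat (n : ℕ) : (Umat n).det = 1 := by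
  have hdiag : ∀ i : Fin n, Umat n i i = 1 := by
    intro i
    rw [Umat, Matrix.of_apply, if_pos le_rfl,
      show (i : ℤ) - ((i : ℕ) : ℤ) = 0 by ring, zpow_zero]
  rw [Matrix.det_of_upperTriangular (M := Umat n) ?ht]
  · rw [Finset.prod_congr rfl fun i _ => hdiag i, Finset.prod_const_one]
  case ht =>
    intro i j hij
    rw [Umat, Matrix.of_apply, if_neg (by exact fun h => absurd h (by simpa using hij.not_ge))]

lemma det_G2 (n : ℕ) : (G2 n).det = 1 := by
  have hdiag : ∀ i : Fin n, G2 n i i = 1 := by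
    intro i
    rw [G2, Matrix.of_apply, if_pos le_rfl, Nat.sub_self, pow_zero]
  rw [Matrix.det_of_lowerTriangular (G2 n) ?ht]
  · rw [Finset.prod_congr rfl fun i _ => hdiag i, Finset.prod_const_one]
  case ht =>
    intro i j hij
    have : (i : ℕ) < (j : ℕ) := hij
    rw [G2, Matrix.of_apply, if_neg (by omega)]

lemma det_kappa (m : ℕ) : (kappaMat (m+1)).det = 1 := by
  have htF := tF_ne_zero
  rw [kappaMat, Matrix.det_diagonal, Fin.prod_univ_castSucc]
  rw [Finset.prod_congr rfl (fun k (_ : k ∈ Finset.univ) =>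
    if_neg (show ¬((Fin.castSucc k : Fin (m+1)) : ℕ) = (m+1) - 1 by
      simp only [Fin.coe_castSucc]; have := k.isLt; omega))]
  rw [if_pos (show ((Fin.last m : Fin (m+1)) : ℕ) = (m+1) - 1 by simp),
    Finset.prod_const, Finset.card_univ, Fintype.card_fin]
  rw [← zpow_natCast tF m, ← zpow_add₀ htF]
  rw [show (m : ℤ) + -(((m+1 : ℕ) : ℤ) - 1) = 0 by push_cast; ring, zpow_zero]

lemma det_G1 (m : ℕ) : (G1 (m+1)).det = 1 := by
  have h := congrArg Matrix.det (key m)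
  rw [Matrix.det_mul, Matrix.det_mul, det_kappa, det_G2, det_Umat, mul_one, mul_one] at h
  exact h

/-! #### Integrality of the factors -/

lemma integral_G1 {n : ℕ} (i j : Fin n) : Integral (G1 n i j) := by
  rw [G1, Matrix.of_apply]
  split
  · exact integral_tF_pow _
  · split
    · exact Integral.one.neg
    · exact Integral.zero

lemma integral_G2 {n : ℕ} (i j : Fin n) : Integral (G2 n i j) := by
  rw [G2, Matrix.of_apply]
  split
  · exact integral_tF_pow _
  · exact Integral.zero

lemma integral_liftC {n : ℕ} (Y : Matrix (Fin n) (Fin n) ℂ) (i j : Fin n) :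
    Integral (liftC Y i j) := by
  rw [liftC, Matrix.map_apply]
  exact integral_algebraMap _

/-! #### Conjugation -/

lemma liftC_mul {n : ℕ} (A B : Matrix (Fin n) (Fin n) ℂ) :
    liftC (A * B) = liftC A * liftC B := by
  rw [liftC, liftC, liftC, Matrix.map_mul]

lemma conj_pow_mat {n : ℕ} (P Q Y : Matrix (Fin n) (Fin n) ℂ)
    (hPQ : P * Q = 1) (hQP : Q * P = 1) (k : ℕ) :
    (P * Y * Q) ^ k = P * Y ^ k * Q := by
  induction k with
  | zero => rw [pow_zero, pow_zero, mul_one, hPQ]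
  | succ k ih =>
    rw [pow_succ, pow_succ, ih]
    calc P * Y ^ k * Q * (P * Y * Q) = P * Y ^ k * (Q * P) * Y * Q := by
          simp only [Matrix.mul_assoc]
      _ = P * (Y ^ k * Y) * Q := by rw [hQP, Matrix.mul_one]; simp only [Matrix.mul_assoc]

lemma Ybar_conj {n : ℕ} (P Q Y : Matrix (Fin n) (Fin n) ℂ)
    (hPQ : P * Q = 1) (hQP : Q * P = 1) :
    Ybar (P * Y * Q) = liftC P * Ybar Y * liftC Q := by
  rw [Ybar, Ybar, Matrix.mul_sum, Finset.sum_mul]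
  refine Finset.sum_congr rfl fun k _ => ?_
  rw [conj_pow_mat P Q Y hPQ hQP k, liftC_mul, liftC_mul,
    Matrix.mul_smul (liftC P) (tF ^ (-(k:ℤ))) (liftC (Y ^ k)),
    Matrix.smul_mul (tF ^ (-(k:ℤ))) (liftC P * liftC (Y ^ k)) (liftC Q)]

/-! #### Existence of a cyclic basis -/

lemma exists_conj {n : ℕ} (hn : 1 ≤ n) (N : Matrix (Fin n) (Fin n) ℂ)
    (hnil : N ^ n = 0) (hreg : N ^ (n-1) ≠ 0) :
    ∃ P Q : Matrix (Fin n) (Fin n) ℂ, P * Q = 1 ∧ Q * P = 1 ∧ N * P = P * Jmat n := by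
  obtain ⟨i0, j0, hij0⟩ : ∃ i j, (N ^ (n-1)) i j ≠ 0 := by
    by_contra h
    push_neg at h
    exact hreg (Matrix.ext fun i j => by simpa using h i j)
  set v : Fin n → ℂ := Pi.single j0 1 with hv
  have hvne : N ^ (n-1) *ᵥ v ≠ 0 := by
    intro h0
    apply hij0
    have := congrFun h0 i0
    simpa [hv] using this
  set w : Fin n → (Fin n → ℂ) := fun j => N ^ (n - 1 - (j:ℕ)) *ᵥ v with hw
  have hNpow_zero : ∀ m : ℕ, n ≤ m → N ^ m = 0 := by
    intro m hm
    have : N ^ m = N ^ n * N ^ (m - n) := by rw [← pow_add]; congr 1; omega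
    rw [this, hnil, zero_mul]
  have hli : LinearIndependent ℂ w := by
    rw [Fintype.linearIndependent_iff]
    intro g hg
    have step : ∀ j : Fin n, (∀ j' : Fin n, (j:ℕ) < (j':ℕ) → g j' = 0) → g j = 0 := by
      intro j hgt
      have happ := congrArg (fun x => N ^ (j:ℕ) *ᵥ x) hg
      simp only [Matrix.mulVec_zero] at happ
      have hsum : N ^ (j:ℕ) *ᵥ (∑ j' : Fin n, g j' • w j')
          = ∑ j' : Fin n, g j' • (N ^ ((j:ℕ) + (n - 1 - (j':ℕ))) *ᵥ v) := by
        rw [← Matrix.mulVecLin_apply, map_sum]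
        refine Finset.sum_congr rfl fun j' _ => ?_
        rw [LinearMap.map_smul, Matrix.mulVecLin_apply, hw]
        simp only
        rw [Matrix.mulVec_mulVec, ← pow_add]
      rw [hsum] at happ
      rw [Finset.sum_eq_single j] at happ
      · have hexp : (j:ℕ) + (n - 1 - (j:ℕ)) = n - 1 := by have := j.isLt; omega
        rw [hexp] at happ
        rcases smul_eq_zero.mp happ with h | h
        · exact h
        · exact absurd h hvne
      · intro j' _ hne
        by_cases hlt : (j:ℕ) < (j':ℕ)
        · rw [hgt j' hlt, zero_smul]
        · have hj'j : (j':ℕ) < (j:ℕ) := by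
            rcases lt_trichotomy ((j':ℕ)) ((j:ℕ)) with h | h | h
            · exact h
            · exact absurd (Fin.ext h) hne
            · exact absurd h hlt
          rw [hNpow_zero _ (by have := j.isLt; omega), Matrix.zero_mulVec, smul_zero]
      · intro hm; exact absurd (Finset.mem_univ _) hm
    have main : ∀ K : ℕ, ∀ j : Fin n, n - 1 - (j:ℕ) ≤ K → g j = 0 := by
      intro K
      induction K with
      | zero =>
        intro j hj
        exact step j fun j' hj' => absurd hj' (by have := j'.isLt; omega)
      | succ K ih =>
        intro j hj
        exact step j fun j' hj' => ih j' (by omega)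
    intro j
    exact main (n-1) j (by omega)
  haveI : Nonempty (Fin n) := ⟨⟨0, hn⟩⟩
  have hcard : Fintype.card (Fin n) = Module.finrank ℂ (Fin n → ℂ) := by
    rw [Module.finrank_fintype_fun_eq_card]
  let bw := basisOfLinearIndependentOfCardEqFinrank hli hcard
  have hbw : ⇑bw = w := coe_basisOfLinearIndependentOfCardEqFinrank hli hcard
  let e := Pi.basisFun ℂ (Fin n)
  haveI : Invertible (e.toMatrix ⇑bw) := e.invertibleToMatrix bw
  set P := e.toMatrix ⇑bw with hPdef
  have hP : ∀ i j, P i j = w j i := by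
    intro i j
    rw [hPdef, Module.Basis.toMatrix_apply, Pi.basisFun_repr, hbw]
  refine ⟨P, ⅟P, mul_invOf_self P, invOf_mul_self P, ?_⟩
  refine Matrix.ext fun i j => ?_
  have hL : (N * P) i j = (N ^ ((n - 1 - (j:ℕ)) + 1) *ᵥ v) i := by
    have h1 : (N * P) i j = (N *ᵥ (N ^ (n - 1 - (j:ℕ)) *ᵥ v)) i := by
      simp only [Matrix.mul_apply, Matrix.mulVec, dotProduct, hP, hw]
    rw [h1, Matrix.mulVec_mulVec, ← pow_succ']
  have hR : (P * Jmat n) i j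
      = if 1 ≤ (j:ℕ) then (N ^ (n - 1 - ((j:ℕ) - 1)) *ᵥ v) i else 0 := by
    rw [Matrix.mul_apply]
    by_cases hj : 1 ≤ (j:ℕ)
    · rw [if_pos hj, Finset.sum_eq_single (⟨(j:ℕ)-1, by have := j.isLt; omega⟩ : Fin n)]
      · rw [hP, Jmat]
        simp only [Matrix.of_apply, Fin.val_mk]
        rw [if_pos (by omega), mul_one, hw]
      · intro b _ hb
        rw [Jmat]
        simp only [Matrix.of_apply]
        rw [if_neg, mul_zero]
        intro hc
        exact hb (Fin.ext (by simp only [Fin.val_mk]; omega))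
      · intro hm; exact absurd (Finset.mem_univ _) hm
    · rw [if_neg hj, Finset.sum_eq_zero]
      intro b _
      rw [Jmat]
      simp only [Matrix.of_apply]
      rw [if_neg (by omega), mul_zero]
  rw [hL, hR]
  by_cases hj : 1 ≤ (j:ℕ)
  · rw [if_pos hj,
      show (n - 1 - (j:ℕ)) + 1 = n - 1 - ((j:ℕ) - 1) by have := j.isLt; omega]
  · rw [if_neg hj, show (n - 1 - (j:ℕ)) + 1 = n by omega, hnil, Matrix.zero_mulVec]
    rfl

end Aux

/-- For a regular nilpotent `N` (i.e. `N^n = 0`, `N^{n-1} ≠ 0`),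
`ψ(N) = Ȳ` lies in `G₀·κ·G₀`. -/
theorem stmt1 {n : ℕ} (hn : 2 ≤ n) (N : Matrix (Fin n) (Fin n) ℂ)
    (hnil : N ^ n = 0) (hreg : N ^ (n - 1) ≠ 0) :
    ∃ g₁ g₂ : Matrix (Fin n) (Fin n) FF,
      MemG0 g₁ ∧ MemG0 g₂ ∧ Ybar N = g₁ * kappaMat n * g₂ := by
  obtain ⟨m, rfl⟩ : ∃ m, n = m + 1 := ⟨n - 1, by omega⟩
  obtain ⟨P, Q, hPQ, hQP, hNP⟩ := exists_conj (by omega) N hnil hreg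
  have hN : N = P * Jmat (m+1) * Q := by
    calc N = N * P * Q := by rw [Matrix.mul_assoc, hPQ, Matrix.mul_one]
    _ = P * Jmat (m+1) * Q := by rw [hNP]
  have hdet : P.det * Q.det = 1 := by
    rw [← Matrix.det_mul, hPQ, Matrix.det_one]
  set φ : ℂ →+* FF := (algebraMap ℂ FF) with hφ
  set D1 : Matrix (Fin (m+1)) (Fin (m+1)) FF :=
    Matrix.diagonal (fun i => if i = 0 then φ Q.det else 1) with hD1
  set D2 : Matrix (Fin (m+1)) (Fin (m+1)) FF :=
    Matrix.diagonal (fun i => if i = 0 then φ P.det else 1) with hD2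
  have hD1det : D1.det = φ Q.det := by
    rw [hD1, Matrix.det_diagonal,
      Finset.prod_ite_eq' Finset.univ (0 : Fin (m+1)) (fun _ => φ Q.det),
      if_pos (Finset.mem_univ _)]
  have hD2det : D2.det = φ P.det := by
    rw [hD2, Matrix.det_diagonal,
      Finset.prod_ite_eq' Finset.univ (0 : Fin (m+1)) (fun _ => φ P.det),
      if_pos (Finset.mem_univ _)]
  have hD1int : ∀ i j, Integral (D1 i j) := by
    intro i j
    rw [hD1, Matrix.diagonal_apply]
    split
    · split
      · exact integral_algebraMap _
      · exact Integral.one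
    · exact Integral.zero
  have hD2int : ∀ i j, Integral (D2 i j) := by
    intro i j
    rw [hD2, Matrix.diagonal_apply]
    split
    · split
      · exact integral_algebraMap _
      · exact Integral.one
    · exact Integral.zero
  have hDkD : D1 * kappaMat (m+1) * D2 = kappaMat (m+1) := by
    rw [hD1, hD2, kappaMat, Matrix.diagonal_mul_diagonal, Matrix.diagonal_mul_diagonal]
    refine congrArg Matrix.diagonal (funext fun i => ?_)
    by_cases h0 : i = 0
    · rw [if_pos h0, if_pos h0]
      calc φ Q.det * (if (i:ℕ) = (m+1) - 1 then tF ^ (-(((m+1:ℕ)) - 1 : ℤ)) else tF) * φ P.det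
          = (if (i:ℕ) = (m+1) - 1 then tF ^ (-(((m+1:ℕ)) - 1 : ℤ)) else tF)
            * (φ Q.det * φ P.det) := by ring
        _ = _ := by rw [← _root_.map_mul, mul_comm Q.det P.det, hdet, _root_.map_one, mul_one]
    · rw [if_neg h0, if_neg h0, one_mul, mul_one]
  have hdetP : (liftC P).det = φ P.det := (RingHom.map_det φ P).symm
  have hdetQ : (liftC Q).det = φ Q.det := (RingHom.map_det φ Q).symm
  refine ⟨liftC P * G1 (m+1) * D1, D2 * (G2 (m+1) * liftC Q), ⟨?_, ?_⟩, ⟨?_, ?_⟩, ?_⟩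
  · rw [Matrix.det_mul, Matrix.det_mul, hdetP, det_G1, hD1det, mul_one, ← _root_.map_mul, hdet,
      _root_.map_one]
  · exact integral_mul_mat (integral_mul_mat (integral_liftC P) integral_G1) hD1int
  · rw [Matrix.det_mul, Matrix.det_mul, hdetQ, det_G2, hD2det, one_mul, ← _root_.map_mul,
      hdet, _root_.map_one]
  · exact integral_mul_mat hD2int (integral_mul_mat integral_G2 (integral_liftC Q))
  · have hDZ : ∀ Z : Matrix (Fin (m+1)) (Fin (m+1)) FF,
        D1 * (kappaMat (m+1) * (D2 * Z)) = kappaMat (m+1) * Z := by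
      intro Z
      rw [← Matrix.mul_assoc, ← Matrix.mul_assoc, hDkD]
    rw [hN, Ybar_conj P Q _ hPQ hQP, Ybar_Jmat, ← key m]
    simp only [Matrix.mul_assoc]
    rw [hDZ (G2 (m+1) * liftC Q)]

end
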